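/- Let $u_{\mathcal{A}}$ be the equiangular vector of $X_{\mathcal{A}}$ ($n \times k$, linearly independent unit columns) and let $\mathcal{B} \subseteq \mathcal{A}$ be a nonempty subset. Then the orthogonal projection of $u_{\mathcal{A}}$ onto $\mathrm{span}(X_{\mathcal{B}})$ equals $(A_{\mathcal{A}}/A_{\mathcal{B}})\, u_{\mathcal{B}}$, where $u_{\mathcal{B}}$ and $A_{\mathcal{B}}$ are the equiangular vector and constant of the submatrix $X_{\mathcal{B}}$. -/

import Mathlib

open Matrix

lemma gram_posDef {m p : Type*} [Fintype m] [Fintype p] [DecidableEq p]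
    (X : Matrix m p ℝ) (h : LinearIndependent ℝ X.transpose) :
    (X.transpose * X).PosDef := by
  refine Matrix.posDef_iff_dotProduct_mulVec.mpr ⟨(Matrix.isHermitian_conjTranspose_mul_self X), fun x hx => ?_⟩
  have hle := (Matrix.posSemidef_conjTranspose_mul_self X).dotProduct_mulVec_nonneg x
  rcases lt_or_eq_of_le hle with h' | h'
  · simpa using h'
  · exfalso
    have h0 : (X.transpose * X) *ᵥ x = 0 := by
      have := (Matrix.posSemidef_conjTranspose_mul_self X).dotProduct_mulVec_zero_iff x
      simpa using this.mp h'.symm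
    have hXx : X *ᵥ x = 0 := by
      have h1 : x ⬝ᵥ ((X.transpose * X) *ᵥ x) = (X *ᵥ x) ⬝ᵥ (X *ᵥ x) := by
        rw [← Matrix.mulVec_mulVec, Matrix.dotProduct_mulVec x, ← Matrix.vecMul_transpose]
      rw [h0, dotProduct_zero] at h1
      exact dotProduct_self_eq_zero.mp h1.symm
    have hsum : ∑ j, x j • X.transpose j = 0 := by
      funext i
      have := congrFun hXx i
      simpa [Matrix.mulVec, dotProduct, mul_comm] using this
    exact hx (funext fun j => Fintype.linearIndependent_iff.mp h x hsum j)

theorem stmt15 (n k : ℕ) (hk : 0 < k)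
    (XA : Matrix (Fin n) (Fin k) ℝ) (hli : LinearIndependent ℝ XA.transpose)
    (hunit : ∀ j, (fun i => XA i j) ⬝ᵥ (fun i => XA i j) = 1)
    (s : Finset (Fin k)) (hs : s.Nonempty) :
    let GA : Matrix (Fin k) (Fin k) ℝ := XA.transpose * XA
    let AA : ℝ := (Real.sqrt ((1 : Fin k → ℝ) ⬝ᵥ (GA⁻¹ *ᵥ (1 : Fin k → ℝ))))⁻¹
    let uA : Fin n → ℝ := AA • (XA *ᵥ (GA⁻¹ *ᵥ (1 : Fin k → ℝ)))
    let XB : Matrix (Fin n) {j // j ∈ s} ℝ := Matrix.of fun i j => XA i j.1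
    let GB : Matrix {j // j ∈ s} {j // j ∈ s} ℝ := XB.transpose * XB
    let AB : ℝ :=
      (Real.sqrt ((1 : {j // j ∈ s} → ℝ) ⬝ᵥ (GB⁻¹ *ᵥ (1 : {j // j ∈ s} → ℝ))))⁻¹
    let uB : Fin n → ℝ := AB • (XB *ᵥ (GB⁻¹ *ᵥ (1 : {j // j ∈ s} → ℝ)))
    (XB * GB⁻¹ * XB.transpose) *ᵥ uA = (AA / AB) • uB := by
  intro GA AA uA XB GB AB uB
  -- GA positive definite, hence invertible
  have hGA : GA.PosDef := gram_posDef XA hli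
  have hGAu : IsUnit GA := hGA.isUnit
  -- XB columns linearly independent
  have hliB : LinearIndependent ℝ XB.transpose := by
    have : XB.transpose = XA.transpose ∘ (Subtype.val : {j // j ∈ s} → Fin k) := by
      funext j i; rfl
    rw [this]
    exact hli.comp _ Subtype.val_injective
  have hGB : GB.PosDef := gram_posDef XB hliB
  -- AB > 0
  have hone : (1 : {j // j ∈ s} → ℝ) ≠ 0 := by
    obtain ⟨j, hj⟩ := hs
    intro h
    have := congrFun h ⟨j, hj⟩
    simp at this
  have htpos : 0 < (1 : {j // j ∈ s} → ℝ) ⬝ᵥ (GB⁻¹ *ᵥ (1 : {j // j ∈ s} → ℝ)) := by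
    have := hGB.inv.dotProduct_mulVec_pos hone
    simpa using this
  have hABpos : 0 < AB := by
    have := Real.sqrt_pos.mpr htpos
    exact inv_pos.mpr this
  -- key: XBᵀ *ᵥ uA = AA • 1
  have hkey : XB.transpose *ᵥ uA = AA • (1 : {j // j ∈ s} → ℝ) := by
    have hGAmul : GA *ᵥ (GA⁻¹ *ᵥ (1 : Fin k → ℝ)) = 1 := by
      rw [Matrix.mulVec_mulVec, Matrix.mul_nonsing_inv _ (isUnit_iff_isUnit_det _ |>.1 hGAu),
        Matrix.one_mulVec]
    funext j
    have hj : (XB.transpose *ᵥ (XA *ᵥ (GA⁻¹ *ᵥ (1 : Fin k → ℝ)))) j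
        = (GA *ᵥ (GA⁻¹ *ᵥ (1 : Fin k → ℝ))) j.1 := by
      have hM : XB.transpose * XA = GA.submatrix Subtype.val id := by
        ext j i
        simp [Matrix.mul_apply, GA, XB]
      rw [Matrix.mulVec_mulVec, hM]
      rfl
    calc (XB.transpose *ᵥ uA) j
        = AA * (XB.transpose *ᵥ (XA *ᵥ (GA⁻¹ *ᵥ (1 : Fin k → ℝ)))) j := by
          simp [uA, Matrix.mulVec_smul, Pi.smul_apply, smul_eq_mul]
      _ = AA * (GA *ᵥ (GA⁻¹ *ᵥ (1 : Fin k → ℝ))) j.1 := by rw [hj]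
      _ = AA := by rw [hGAmul]; simp
      _ = (AA • (1 : {j // j ∈ s} → ℝ)) j := by simp
  -- conclude
  calc (XB * GB⁻¹ * XB.transpose) *ᵥ uA
      = (XB * GB⁻¹) *ᵥ (XB.transpose *ᵥ uA) := by
        rw [← Matrix.mulVec_mulVec]
    _ = (XB * GB⁻¹) *ᵥ (AA • (1 : {j // j ∈ s} → ℝ)) := by rw [hkey]
    _ = AA • (XB *ᵥ (GB⁻¹ *ᵥ (1 : {j // j ∈ s} → ℝ))) := by
        rw [Matrix.mulVec_smul, ← Matrix.mulVec_mulVec]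
    _ = (AA / AB) • uB := by
        simp only [uB, smul_smul]
        congr 1
        field_simp
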